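/- Let W^1, W^2 be real matrices, let ρ:ℝ→ℝ be 1-Lipschitz and applied entrywise, let Ŵ^2 ∈ B_{W^2}(ε_2) and x̂ ∈ B_x(ε_x). Then the second-layer pre-activation error under joint input-weight perturbation satisfies ‖Ŵ^2 ρ(W^1 x̂) − W^2 ρ(W^1 x)‖_∞ ≤ ε_2 ‖ρ(W^1 x)‖_1 + ε_x ‖Ŵ^2‖_∞ ‖W^1‖_∞. -/
import Mathlib


/-- Vector ℓ1 norm: `‖v‖₁ = Σ_q |v_q|`. -/
noncomputable def vecL1 {n : ℕ} (v : Fin n → ℝ) : ℝ := ∑ q, |v q|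

/-- Vector ℓ∞ norm: `‖v‖_∞ = max_q |v_q|`. -/
noncomputable def vecLinf {n : ℕ} (v : Fin n → ℝ) : ℝ := ⨆ q, |v q|

/-- Matrix ℓ∞→ℓ∞ operator norm: `‖W‖_∞ = max_p Σ_q |W_{p,q}|`. -/
noncomputable def matLinf {m n : ℕ} (W : Matrix (Fin m) (Fin n) ℝ) : ℝ := ⨆ p, ∑ q, |W p q|

/-- Matrix ℓ1→ℓ1 operator norm: `‖W‖₁ = max_q Σ_p |W_{p,q}|`. -/
noncomputable def matL1 {m n : ℕ} (W : Matrix (Fin m) (Fin n) ℝ) : ℝ := ⨆ q, ∑ p, |W p q|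

lemma matLinf_nonneg {m n : ℕ} (W : Matrix (Fin m) (Fin n) ℝ) : 0 ≤ matLinf W := by
  rcases isEmpty_or_nonempty (Fin m) with h | h
  · simp [matLinf, Real.iSup_of_isEmpty]
  · exact le_ciSup_of_le (Set.Finite.bddAbove (Set.finite_range _))
      (Classical.arbitrary _) (Finset.sum_nonneg fun q _ => abs_nonneg _)

lemma row_le_matLinf {m n : ℕ} (W : Matrix (Fin m) (Fin n) ℝ) (p : Fin m) :
    ∑ q, |W p q| ≤ matLinf W := by
  exact le_ciSup (Set.Finite.bddAbove (Set.finite_range fun p => ∑ q, |W p q|)) p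

/-- second-layer pre-activation error under joint input-weight
perturbation: `‖Ŵ^2 ρ(W^1 x̂) − W^2 ρ(W^1 x)‖_∞ ≤ ε_2 ‖ρ(W^1 x)‖_1 + ε_x ‖Ŵ^2‖_∞ ‖W^1‖_∞`. -/
theorem statement6 {n0 n1 n2 : ℕ}
    (W1 : Matrix (Fin n1) (Fin n0) ℝ) (W2 What2 : Matrix (Fin n2) (Fin n1) ℝ)
    (ρ : ℝ → ℝ) (hρ_lip : ∀ s t, |ρ s - ρ t| ≤ |s - t|)
    (ε2 εx : ℝ) (hε2 : 0 ≤ ε2) (hεx : 0 ≤ εx)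
    (h2 : ∀ p q, |What2 p q - W2 p q| ≤ ε2)
    (x xhat : Fin n0 → ℝ) (hx : ∀ q, |xhat q - x q| ≤ εx) :
    vecLinf (fun i => What2.mulVec (fun p => ρ (W1.mulVec xhat p)) i -
        W2.mulVec (fun p => ρ (W1.mulVec x p)) i) ≤
      ε2 * vecL1 (fun p => ρ (W1.mulVec x p)) + εx * matLinf What2 * matLinf W1 := by
  set y : Fin n1 → ℝ := fun p => ρ (W1.mulVec x p) with hy
  set yh : Fin n1 → ℝ := fun p => ρ (W1.mulVec xhat p) with hyh
  have hvL1 : 0 ≤ vecL1 y := Finset.sum_nonneg fun q _ => abs_nonneg _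
  -- bound on activation differences
  have hdiff : ∀ p, |yh p - y p| ≤ εx * matLinf W1 := by
    intro p
    calc |yh p - y p| ≤ |W1.mulVec xhat p - W1.mulVec x p| := hρ_lip _ _
      _ = |∑ q, W1 p q * (xhat q - x q)| := by
          simp [Matrix.mulVec, dotProduct, mul_sub, Finset.sum_sub_distrib]
      _ ≤ ∑ q, |W1 p q * (xhat q - x q)| := Finset.abs_sum_le_sum_abs _ _
      _ ≤ ∑ q, |W1 p q| * εx := by
          refine Finset.sum_le_sum fun q _ => ?_
          rw [abs_mul]
          exact mul_le_mul_of_nonneg_left (hx q) (abs_nonneg _)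
      _ = (∑ q, |W1 p q|) * εx := by rw [Finset.sum_mul]
      _ ≤ matLinf W1 * εx := mul_le_mul_of_nonneg_right (row_le_matLinf _ _) hεx
      _ = εx * matLinf W1 := mul_comm _ _
  rcases isEmpty_or_nonempty (Fin n2) with h | h
  · have : matLinf What2 = 0 := by simp [matLinf, Real.iSup_of_isEmpty]
    simp only [vecLinf, Real.iSup_of_isEmpty, this, mul_zero, zero_mul, add_zero]
    positivity
  · refine ciSup_le fun i => ?_
    have key : |What2.mulVec yh i - W2.mulVec y i| ≤
        ε2 * vecL1 y + matLinf What2 * (εx * matLinf W1) := by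
      have expand : What2.mulVec yh i - W2.mulVec y i =
          ∑ p, ((What2 i p - W2 i p) * y p + What2 i p * (yh p - y p)) := by
        simp [Matrix.mulVec, dotProduct, sub_mul, mul_sub, Finset.sum_add_distrib,
          Finset.sum_sub_distrib]
      rw [expand]
      calc |∑ p, ((What2 i p - W2 i p) * y p + What2 i p * (yh p - y p))|
          ≤ ∑ p, |(What2 i p - W2 i p) * y p + What2 i p * (yh p - y p)| :=
            Finset.abs_sum_le_sum_abs _ _
        _ ≤ ∑ p, (ε2 * |y p| + |What2 i p| * (εx * matLinf W1)) := by
            refine Finset.sum_le_sum fun p _ => ?_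
            calc |(What2 i p - W2 i p) * y p + What2 i p * (yh p - y p)|
                ≤ |(What2 i p - W2 i p) * y p| + |What2 i p * (yh p - y p)| := abs_add_le _ _
              _ = |What2 i p - W2 i p| * |y p| + |What2 i p| * |yh p - y p| := by
                  rw [abs_mul, abs_mul]
              _ ≤ ε2 * |y p| + |What2 i p| * (εx * matLinf W1) := by
                  gcongr
                  · exact h2 i p
                  · exact hdiff p
        _ = ε2 * vecL1 y + (∑ p, |What2 i p|) * (εx * matLinf W1) := by
            rw [Finset.sum_add_distrib, ← Finset.mul_sum, ← Finset.sum_mul, vecL1]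
        _ ≤ ε2 * vecL1 y + matLinf What2 * (εx * matLinf W1) := by
            gcongr
            · have := matLinf_nonneg W1; positivity
            · exact row_le_matLinf _ _
    calc |What2.mulVec yh i - W2.mulVec y i| ≤
        ε2 * vecL1 y + matLinf What2 * (εx * matLinf W1) := key
      _ = ε2 * vecL1 y + εx * matLinf What2 * matLinf W1 := by ring
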